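/- Suppose an explicit Runge–Kutta method (A,b) with c = A e has block structure A = [[0,0,0],[A₂₁,A₂₂,0],[A₃₁,A₃₂,A₃₃]] with A₂₂ of size (q−1)×(q−1), that c₁=0 and c₂,…,c_{q+1} are distinct, that some L satisfies both Sylvester equations A₃₃L − L W_U V_U^{−1} = (A₃₃ V_L − W_L) V_U^{−1} and L A₂₂ − A₃₃ L = A₃₂, and that b = [1,0; 0,−L^T; 0,I] β for some β. Then for every k with 1 ≤ k ≤ q and every j ≥ 0, b^T A^j τ⁽ᵏ⁾ = 0, where τ⁽ᵏ⁾ = A c^{k−1} − (1/k) c^k; i.e., the method has weak stage order at least q. -/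

import Mathlib

open Matrix

/-- Sufficient conditions for weak stage order at least `q` (Theorem 4.3 of the
paper): an explicit RK scheme `(A, b)` with `c = A e`, `c₁ = 0`, distinct abscissae
`c₁, …, c_{q+1}`, a matrix `L` solving both Sylvester equations
`A₃₃ L - L W_U V_U⁻¹ = (A₃₃ V_L - W_L) V_U⁻¹` and `L A₂₂ - A₃₃ L = A₃₂`, and
`b = [1,0; 0,-Lᵀ; 0,I] β`, satisfies `bᵀ Aʲ τ⁽ᵏ⁾ = 0` for all `j ≥ 0` and
`1 ≤ k ≤ q`, where `τ⁽ᵏ⁾ = A c^{k-1} - (1/k) c^k` (entrywise powers); i.e. it has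
weak stage order at least `q`.  Blocks of `A` are encoded via the index embeddings
`e2` (rows/columns `2..q`) and `e3` (rows/columns `q+1..s`). -/
theorem wso_ge_q_of_sylvester (s q : ℕ) (hq : 2 ≤ q) (hqs : q < s)
    (A : Matrix (Fin s) (Fin s) ℝ) (b : Fin s → ℝ)
    (hA : ∀ i j : Fin s, i ≤ j → A i j = 0)
    (c : Fin s → ℝ) (hc : c = A *ᵥ (1 : Fin s → ℝ))
    (hc1 : ∀ k : Fin s, (k : ℕ) = 0 → c k = 0)
    (hdist : ∀ i j : Fin s, (i : ℕ) ≤ q → (j : ℕ) ≤ q → i ≠ j → c i ≠ c j)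
    (e2 : Fin (q - 1) → Fin s) (he2 : ∀ i, (e2 i : ℕ) = (i : ℕ) + 1)
    (e3 : Fin (s - q) → Fin s) (he3 : ∀ i, (e3 i : ℕ) = (i : ℕ) + q)
    (L : Matrix (Fin (s - q)) (Fin (q - 1)) ℝ)
    (VU WU : Matrix (Fin (q - 1)) (Fin (q - 1)) ℝ)
    (VL WL : Matrix (Fin (s - q)) (Fin (q - 1)) ℝ)
    (hVU : ∀ i j, VU i j = c (e2 i) ^ ((j : ℕ) + 1))
    (hWU : ∀ i j, WU i j = c (e2 i) ^ ((j : ℕ) + 2) / ((j : ℕ) + 2))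
    (hVL : ∀ i j, VL i j = c (e3 i) ^ ((j : ℕ) + 1))
    (hWL : ∀ i j, WL i j = c (e3 i) ^ ((j : ℕ) + 2) / ((j : ℕ) + 2))
    (hSyl1 : (Matrix.of fun i j => A (e3 i) (e3 j)) * L - L * (WU * VU⁻¹)
        = ((Matrix.of fun i j => A (e3 i) (e3 j)) * VL - WL) * VU⁻¹)
    (hSyl2 : L * (Matrix.of fun i j => A (e2 i) (e2 j))
          - (Matrix.of fun i j => A (e3 i) (e3 j)) * L
        = Matrix.of fun i j => A (e3 i) (e2 j))
    (β0 : ℝ) (β : Fin (s - q) → ℝ)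
    (hb0 : ∀ k : Fin s, (k : ℕ) = 0 → b k = β0)
    (hb2 : ∀ i, b (e2 i) = -∑ j, L j i * β j)
    (hb3 : ∀ i, b (e3 i) = β i) :
    ∀ k : ℕ, 1 ≤ k → k ≤ q → ∀ j : ℕ,
      (b ᵥ* (A ^ j)) ⬝ᵥ
        (A *ᵥ (fun t => c t ^ (k - 1)) - ((1 : ℝ) / k) • fun t => c t ^ k) = 0 := by
  have hs0 : 0 < s := by omega
  obtain ⟨z0, hz0⟩ : ∃ z : Fin s, (z : ℕ) = 0 := ⟨⟨0, hs0⟩, rfl⟩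
  -- splitting of sums over `Fin s` according to the blocks
  have hφ : Function.Bijective
      (Sum.elim (fun _ : Fin 1 => z0) (Sum.elim e2 e3)) := by
    constructor
    · rintro (x | x | x) (y | y | y) h <;>
        simp only [Sum.elim_inl, Sum.elim_inr, Fin.ext_iff, hz0, he2, he3] at h <;>
        first
          | exact congrArg Sum.inl (Subsingleton.elim x y)
          | exact absurd h (by omega)
          | exact congrArg (Sum.inr ∘ Sum.inl) (Fin.ext (by omega))
          | exact congrArg (Sum.inr ∘ Sum.inr) (Fin.ext (by omega))
    · intro t
      rcases Nat.lt_or_ge (t : ℕ) 1 with h1 | h1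
      · exact ⟨Sum.inl 0, Fin.ext (by simp only [Sum.elim_inl, hz0]; omega)⟩
      · rcases Nat.lt_or_ge (t : ℕ) q with h2 | h2
        · refine ⟨Sum.inr (Sum.inl ⟨(t : ℕ) - 1, by omega⟩), Fin.ext ?_⟩
          simp only [Sum.elim_inr, Sum.elim_inl, he2]; omega
        · refine ⟨Sum.inr (Sum.inr ⟨(t : ℕ) - q, by have := t.isLt; omega⟩), Fin.ext ?_⟩
          simp only [Sum.elim_inr, he3]; omega
  have hsum : ∀ f : Fin s → ℝ,
      ∑ t, f t = f z0 + (∑ i, f (e2 i)) + (∑ i, f (e3 i)) := by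
    intro f
    rw [← Fintype.sum_bijective _ hφ (fun x => f (Sum.elim (fun _ : Fin 1 => z0)
      (Sum.elim e2 e3) x)) f (fun _ => rfl)]
    simp [Fintype.sum_sum_type, add_assoc]
  -- basic consequences of strict lower triangularity
  have hc0 : c z0 = 0 := hc1 z0 hz0
  have hA0 : ∀ j, A z0 j = 0 := fun j => hA z0 j (by rw [Fin.le_def, hz0]; omega)
  have hA23 : ∀ i j, A (e2 i) (e3 j) = 0 := fun i j =>
    hA _ _ (by have hi := i.isLt; rw [Fin.le_def, he2, he3]; omega)
  have hrow0 : ∀ v : Fin s → ℝ, (A *ᵥ v) z0 = 0 := by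
    intro v; simp [mulVec, dotProduct, hA0]
  have hrow2 : ∀ v : Fin s → ℝ, v z0 = 0 → ∀ i,
      (A *ᵥ v) (e2 i) = ∑ j, A (e2 i) (e2 j) * v (e2 j) := by
    intro v hv i
    show ∑ t, A (e2 i) t * v t = _
    rw [hsum (fun t => A (e2 i) t * v t)]
    simp [hv, hA23]
  have hrow3 : ∀ v : Fin s → ℝ, v z0 = 0 → ∀ i,
      (A *ᵥ v) (e3 i) = (∑ j, A (e3 i) (e2 j) * v (e2 j))
        + ∑ j, A (e3 i) (e3 j) * v (e3 j) := by
    intro v hv i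
    show ∑ t, A (e3 i) t * v t = _
    rw [hsum (fun t => A (e3 i) t * v t)]
    simp [hv]
  -- the invariant subspace
  set P : (Fin s → ℝ) → Prop :=
    fun y => y z0 = 0 ∧ ∀ i, y (e3 i) = ∑ j, L i j * y (e2 j) with hP
  -- b is orthogonal to P
  have hbP : ∀ y : Fin s → ℝ, P y → b ⬝ᵥ y = 0 := by
    rintro y ⟨h0, h3⟩
    show ∑ t, b t * y t = 0
    rw [hsum (fun t => b t * y t)]
    have key : ∑ i, (∑ j, L j i * β j) * y (e2 i)
        = ∑ i, β i * ∑ j, L i j * y (e2 j) := by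
      simp_rw [Finset.sum_mul, Finset.mul_sum]
      rw [Finset.sum_comm]
      exact Finset.sum_congr rfl fun i _ => Finset.sum_congr rfl fun j _ => by ring
    simp only [h0, mul_zero, zero_add, hb2, hb3, h3, neg_mul]
    rw [Finset.sum_neg_distrib, key, neg_add_cancel]
  -- A preserves P
  have hAP : ∀ y : Fin s → ℝ, P y → P (A *ᵥ y) := by
    rintro y ⟨h0, h3⟩
    refine ⟨hrow0 y, fun i => ?_⟩
    have hS0 := congrArg (fun M => M *ᵥ fun j => y (e2 j)) hSyl2
    simp only [Matrix.sub_mulVec, ← Matrix.mulVec_mulVec] at hS0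
    have hS := congrFun hS0 i
    simp only [Pi.sub_apply, mulVec, dotProduct, Matrix.of_apply] at hS
    rw [hrow3 y h0 i]
    simp only [hrow2 y h0, h3]
    linarith [hS]
  -- invertibility of VU
  have hcUne : ∀ i, c (e2 i) ≠ 0 := by
    intro i
    have hne : e2 i ≠ z0 := by
      intro h; apply_fun (Fin.val) at h; rw [he2, hz0] at h; omega
    have := hdist (e2 i) z0 (by have := i.isLt; rw [he2]; omega) (by omega) hne
    rwa [hc0] at this
  have hinj : Function.Injective fun i => c (e2 i) := by
    intro i j h
    by_contra hne
    have hne2 : e2 i ≠ e2 j := by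
      intro h'; apply_fun (Fin.val) at h'; rw [he2, he2] at h'
      exact hne (Fin.ext (by omega))
    exact hdist (e2 i) (e2 j) (by have := i.isLt; rw [he2]; omega)
      (by have := j.isLt; rw [he2]; omega) hne2 h
  have hVUdet : IsUnit VU.det := by
    have hfac : VU = Matrix.diagonal (fun i => c (e2 i))
        * Matrix.vandermonde (fun i => c (e2 i)) := by
      ext i j
      rw [Matrix.diagonal_mul, Matrix.vandermonde, hVU]
      simp [pow_succ']
    rw [hfac, Matrix.det_mul, Matrix.det_diagonal]
    exact IsUnit.mk0 _ (mul_ne_zero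
      (Finset.prod_ne_zero_iff.mpr fun i _ => hcUne i)
      (Matrix.det_vandermonde_ne_zero_iff.mpr hinj))
  have hVUinv : VU⁻¹ * VU = 1 := Matrix.nonsing_inv_mul VU hVUdet
  -- the key matrix identity
  have h1 := congrArg (fun M => M * VU) hSyl1
  simp only [Matrix.sub_mul, Matrix.mul_assoc, hVUinv, Matrix.mul_one] at h1
  have h2 := congrArg (fun M => M * VU) hSyl2
  simp only [Matrix.sub_mul, Matrix.mul_assoc] at h2
  have hKey : (Matrix.of fun i j => A (e3 i) (e2 j)) * VU
        + (Matrix.of fun i j => A (e3 i) (e3 j)) * VL - WL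
      = L * ((Matrix.of fun i j => A (e2 i) (e2 j)) * VU) - L * WU := by
    have h1' : (Matrix.of fun i j => A (e3 i) (e3 j)) * VL - WL
        = (Matrix.of fun i j => A (e3 i) (e3 j)) * (L * VU) - L * WU := h1.symm
    have h2' : (Matrix.of fun i j => A (e3 i) (e2 j)) * VU
          + (Matrix.of fun i j => A (e3 i) (e3 j)) * (L * VU)
        = L * ((Matrix.of fun i j => A (e2 i) (e2 j)) * VU) := by
      rw [← h2]; abel
    calc (Matrix.of fun i j => A (e3 i) (e2 j)) * VU
          + (Matrix.of fun i j => A (e3 i) (e3 j)) * VL - WL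
        = (Matrix.of fun i j => A (e3 i) (e2 j)) * VU
          + ((Matrix.of fun i j => A (e3 i) (e3 j)) * VL - WL) := by abel
      _ = (Matrix.of fun i j => A (e3 i) (e2 j)) * VU
          + ((Matrix.of fun i j => A (e3 i) (e3 j)) * (L * VU) - L * WU) := by rw [h1']
      _ = ((Matrix.of fun i j => A (e3 i) (e2 j)) * VU
          + (Matrix.of fun i j => A (e3 i) (e3 j)) * (L * VU)) - L * WU := by abel
      _ = L * ((Matrix.of fun i j => A (e2 i) (e2 j)) * VU) - L * WU := by rw [h2']
  -- main argument
  intro k hk1 hkq j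
  set τ : Fin s → ℝ :=
    A *ᵥ (fun t => c t ^ (k - 1)) - ((1 : ℝ) / k) • fun t => c t ^ k with hτ
  suffices hPt : P τ by
    have hPn : ∀ n : ℕ, P ((A ^ n) *ᵥ τ) := by
      intro n
      induction n with
      | zero => simpa using hPt
      | succ n ih =>
        rw [pow_succ', ← Matrix.mulVec_mulVec]
        exact hAP _ ih
    rw [← Matrix.dotProduct_mulVec]
    exact hbP _ (hPn j)
  -- τ ∈ P
  rcases Nat.lt_or_ge k 2 with hk2 | hk2
  · -- k = 1 : τ = 0
    have hk : k = 1 := by omega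
    subst hk
    have h1f : (fun t : Fin s => c t ^ (1 - 1)) = (1 : Fin s → ℝ) := by
      funext t; simp
    have hτ0 : τ = 0 := by
      rw [hτ, h1f, ← hc]
      funext t
      simp
    rw [hτ0]
    exact ⟨rfl, fun i => by simp⟩
  · -- 2 ≤ k ≤ q
    have hvc0 : (fun t : Fin s => c t ^ (k - 1)) z0 = 0 := by
      show c z0 ^ (k - 1) = 0
      rw [hc0]; exact zero_pow (by omega)
    have hτ0 : τ z0 = 0 := by
      simp [hτ, hrow0, hc0, zero_pow (show k ≠ 0 by omega)]
    refine ⟨hτ0, fun i => ?_⟩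
    set e0 : Fin (q - 1) := ⟨k - 2, by omega⟩ with he0
    have hval : (e0 : ℕ) = k - 2 := rfl
    have hkcast : ((k - 2 : ℕ) : ℝ) + 2 = (k : ℝ) := by
      have hk' : k - 2 + 2 = k := by omega
      have h' : ((k - 2 : ℕ) : ℝ) + 2 = ((k - 2 + 2 : ℕ) : ℝ) := by push_cast; ring
      rw [h', hk']
    have hp1 : (e0 : ℕ) + 1 = k - 1 := by rw [hval]; omega
    have hp2 : (e0 : ℕ) + 2 = k := by rw [hval]; omega
    have hVUu : VU *ᵥ Pi.single e0 1 = fun t => c (e2 t) ^ (k - 1) := by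
      funext t
      simp only [Matrix.mulVec_single_one, Matrix.col_apply, hVU, hp1]
    have hVLu : VL *ᵥ Pi.single e0 1 = fun t => c (e3 t) ^ (k - 1) := by
      funext t
      simp only [Matrix.mulVec_single_one, Matrix.col_apply, hVL, hp1]
    have hWUu : WU *ᵥ Pi.single e0 1 = fun t => (1 / (k : ℝ)) * c (e2 t) ^ k := by
      funext t
      simp only [Matrix.mulVec_single_one, Matrix.col_apply, hWU, hp2, hval, hkcast, Nat.sub_add_cancel hk2]
      ring
    have hWLu : WL *ᵥ Pi.single e0 1 = fun t => (1 / (k : ℝ)) * c (e3 t) ^ k := by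
      funext t
      simp only [Matrix.mulVec_single_one, Matrix.col_apply, hWL, hp2, hval, hkcast, Nat.sub_add_cancel hk2]
      ring
    have hKv0 := congrArg (fun M => M *ᵥ (Pi.single e0 (1 : ℝ))) hKey
    simp only [Matrix.add_mulVec, Matrix.sub_mulVec, ← Matrix.mulVec_mulVec,
      hVUu, hVLu, hWUu, hWLu] at hKv0
    have hKv := congrFun hKv0 i
    simp only [Pi.add_apply, Pi.sub_apply, mulVec, dotProduct, Matrix.of_apply] at hKv
    have hr2 : ∀ x, (A *ᵥ fun t => c t ^ (k - 1)) (e2 x)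
        = ∑ j, A (e2 x) (e2 j) * c (e2 j) ^ (k - 1) :=
      fun x => hrow2 (fun t => c t ^ (k - 1)) hvc0 x
    have hr3 : (A *ᵥ fun t => c t ^ (k - 1)) (e3 i)
        = (∑ j, A (e3 i) (e2 j) * c (e2 j) ^ (k - 1))
          + ∑ j, A (e3 i) (e3 j) * c (e3 j) ^ (k - 1) :=
      hrow3 (fun t => c t ^ (k - 1)) hvc0 i
    show τ (e3 i) = ∑ j, L i j * τ (e2 j)
    simp only [hτ, Pi.sub_apply, Pi.smul_apply, smul_eq_mul]
    rw [hr3, hKv, ← Finset.sum_sub_distrib]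
    refine Finset.sum_congr rfl fun x _ => ?_
    rw [hr2 x]
    ring
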